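/- Let k be a positive odd integer, ε ∈ {1,−1}, and m = ε + 2^j r with j = (k−1)/2 ≥ 2 and r odd. Then the number of integers x with 1 ≤ x ≤ 2^k and (x−m)(xm−1) ≡ 0 (mod 2^k) equals 2^j. -/

import Mathlib

lemma exists_pow_odd_aux : ∀ N : ℕ, ∀ n : ℤ, n.natAbs ≤ N → n ≠ 0 →
    ∃ a : ℕ, ∃ u : ℤ, Odd u ∧ n = 2 ^ a * u := by
  intro N
  induction N with
  | zero => intro n h hn; omega
  | succ N ih =>
    intro n h hn
    rcases Int.even_or_odd n with ⟨c, hc⟩ | hodd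
    · have hc0 : c ≠ 0 := by omega
      have hle : c.natAbs ≤ N := by omega
      obtain ⟨a, u, hu, h2⟩ := ih c hle hc0
      exact ⟨a + 1, u, hu, by rw [hc, h2]; ring⟩
    · exact ⟨0, n, hodd, by ring⟩
lemma key_equiv (jj : ℕ) (ε r m : ℤ) (hε : ε = 1 ∨ ε = -1) (hr : Odd r)
    (hm : m = ε + 2 ^ (jj + 2) * r) (x : ℤ) :
    (2 : ℤ) ^ (2 * (jj + 2) + 1) ∣ (x - m) * (x * m - 1) ↔ (2 : ℤ) ^ (jj + 3) ∣ x - m := by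
  have hε2 : ε ^ 2 = 1 := by rcases hε with h | h <;> simp [h]
  have hεodd : Odd ε := by rcases hε with h | h <;> simp [h]
  set s : ℤ := ε * r + 2 ^ (jj + 1) * r ^ 2 with hs_def
  have hm2 : m ^ 2 - 1 = 2 ^ (jj + 3) * s := by rw [hm, hs_def]; linear_combination hε2
  have hs : Odd s := by
    refine (hεodd.mul hr).add_even ⟨2 ^ jj * r ^ 2, by rw [show jj+1 = jj+1 from rfl]; ring⟩
  have hmodd : Odd m := by
    rw [hm]; exact hεodd.add_even ⟨2 ^ (jj + 1) * r, by ring⟩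
  constructor
  · intro hdvd
    by_contra hnd
    have hx0 : x - m ≠ 0 := fun h => hnd (h ▸ dvd_zero _)
    obtain ⟨a, u, hu, hau⟩ := exists_pow_odd_aux (x - m).natAbs _ le_rfl hx0
    have ha : a ≤ jj + 2 := by
      by_contra hA
      exact hnd (by rw [hau]; exact Dvd.dvd.mul_right (pow_dvd_pow 2 (by omega)) u)
    have hxm1 : x * m - 1 = 2 ^ a * (m * u + 2 ^ (jj + 3 - a) * s) := by
      have h1 : x * m - 1 = m * (x - m) + (m ^ 2 - 1) := by ring
      rw [h1, hau, hm2]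
      rw [show (2:ℤ) ^ (jj + 3) = 2 ^ a * 2 ^ (jj + 3 - a) by rw [← pow_add]; congr 1; omega]
      ring
    have hw : Odd (m * u + 2 ^ (jj + 3 - a) * s) := by
      refine (hmodd.mul hu).add_even ⟨2 ^ (jj + 2 - a) * s, ?_⟩
      rw [show (2:ℤ) ^ (jj + 3 - a) = 2 * 2 ^ (jj + 2 - a) by
        rw [show jj + 3 - a = (jj + 2 - a) + 1 by omega]; ring]
      ring
    have hprod : (x - m) * (x * m - 1)
        = 2 ^ (2 * a) * (u * (m * u + 2 ^ (jj + 3 - a) * s)) := by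
      rw [hau, hxm1]; ring
    have h3 : (2:ℤ) ^ (2 * (jj + 2) + 1 - 2 * a) ∣ u * (m * u + 2 ^ (jj + 3 - a) * s) := by
      rw [hprod, show 2 * (jj + 2) + 1 = 2 * a + (2 * (jj + 2) + 1 - 2 * a) by omega,
        pow_add] at hdvd
      exact (mul_dvd_mul_iff_left (pow_ne_zero _ (two_ne_zero))).mp hdvd
    have h4 : (2:ℤ) ∣ u * (m * u + 2 ^ (jj + 3 - a) * s) :=
      dvd_trans (dvd_pow_self 2 (by omega)) h3
    obtain ⟨c, hc⟩ := hu.mul hw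
    obtain ⟨e, he⟩ := h4
    omega
  · rintro ⟨t, ht⟩
    refine ⟨2 * (t * (m * t + s)), ?_⟩
    have hx : x = m + 2 ^ (jj + 3) * t := by linarith
    rw [hx]
    linear_combination (2 ^ (jj + 3) * t) * hm2
lemma count_cong (jj : ℕ) (m : ℤ) (hmodd : Odd m) :
    ((Finset.Icc 1 ((2:ℤ) ^ (2 * (jj + 2) + 1))).filter
      (fun x => (2:ℤ) ^ (jj + 3) ∣ x - m)).card = 2 ^ (jj + 2) := by
  set d : ℤ := 2 ^ (jj + 3) with hd_def
  set E : ℤ := 2 ^ (jj + 2) with hE_def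
  set N : ℤ := 2 ^ (2 * (jj + 2) + 1) with hN_def
  have hd0 : 0 < d := by positivity
  have hE0 : 0 < E := by positivity
  have hN : N = d * E := by rw [hd_def, hE_def, hN_def, ← pow_add]; congr 1; omega
  set m0 : ℤ := m % d with hm0_def
  have hm0a : 0 ≤ m0 := Int.emod_nonneg m (ne_of_gt hd0)
  have hm0b : m0 < d := Int.emod_lt_of_pos m hd0
  have hdm : d ∣ m - m0 := by
    rw [hm0_def, Int.emod_def]
    exact ⟨m / d, by ring⟩
  have hm0odd : Odd m0 := by
    obtain ⟨c, hc⟩ := hdm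
    have h2d : (2:ℤ) ∣ d := dvd_pow_self 2 (by omega)
    obtain ⟨e, he⟩ := h2d
    obtain ⟨f, hf⟩ := hmodd
    exact ⟨f - e * c, by rw [show m0 = m - d * c by linarith, hf, he]; ring⟩
  have hm01 : 1 ≤ m0 := by obtain ⟨c, hc⟩ := hm0odd; omega
  have hE_cast : ((2 ^ (jj + 2) : ℕ) : ℤ) = E := by rw [hE_def]; push_cast; ring
  rw [← Finset.card_range (2 ^ (jj + 2))]
  apply Finset.card_nbij' (i := fun x => ((x - m0) / d).toNat)
    (j := fun t => m0 + d * (t : ℤ))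
  · intro x hx
    simp only [Finset.mem_coe, Finset.mem_filter, Finset.mem_Icc] at hx
    obtain ⟨⟨hx1, hx2⟩, hdvd⟩ := hx
    have hdx : d ∣ x - m0 := by
      have := dvd_add hdvd hdm
      rwa [show x - m + (m - m0) = x - m0 by ring] at this
    obtain ⟨q, hq⟩ := hdx
    have hq0 : 0 ≤ q := by
      by_contra hqn
      push_neg at hqn
      have : d * q ≤ d * (-1) := mul_le_mul_of_nonneg_left (by omega) hd0.le
      linarith
    have hqE : q < E := by
      have h1 : d * q < d * E := by rw [← hq, ← hN]; linarith
      exact lt_of_mul_lt_mul_left h1 hd0.le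
    have hdivq : (x - m0) / d = q := by rw [hq]; exact Int.mul_ediv_cancel_left _ (ne_of_gt hd0)
    simp only [Finset.mem_coe, Finset.mem_range]
    rw [hdivq]
    have : q < ((2 ^ (jj + 2) : ℕ) : ℤ) := by rw [hE_cast]; exact hqE
    omega
  · intro t ht
    simp only [Finset.mem_coe, Finset.mem_range] at ht
    have htE : (t : ℤ) < E := by
      rw [← hE_cast]; exact_mod_cast ht
    simp only [Finset.mem_coe, Finset.mem_filter, Finset.mem_Icc]
    have hdt0 : 0 ≤ d * (t : ℤ) := by positivity
    refine ⟨⟨by linarith, ?_⟩, ?_⟩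
    · have h1 : d * (t : ℤ) ≤ d * (E - 1) := mul_le_mul_of_nonneg_left (by omega) hd0.le
      calc m0 + d * (t : ℤ) ≤ (d - 1) + d * (E - 1) := by linarith
        _ ≤ N := by rw [hN]; ring_nf; linarith
    · have : m0 + d * (t : ℤ) - m = d * (t : ℤ) - (m - m0) := by ring
      rw [this]
      exact dvd_sub ⟨(t : ℤ), rfl⟩ hdm
  · intro x hx
    simp only [Finset.mem_coe, Finset.mem_filter, Finset.mem_Icc] at hx
    obtain ⟨⟨hx1, hx2⟩, hdvd⟩ := hx
    have hdx : d ∣ x - m0 := by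
      have := dvd_add hdvd hdm
      rwa [show x - m + (m - m0) = x - m0 by ring] at this
    obtain ⟨q, hq⟩ := hdx
    have hq0 : 0 ≤ q := by
      by_contra hqn
      push_neg at hqn
      have : d * q ≤ d * (-1) := mul_le_mul_of_nonneg_left (by omega) hd0.le
      linarith
    have hdivq : (x - m0) / d = q := by rw [hq]; exact Int.mul_ediv_cancel_left _ (ne_of_gt hd0)
    show m0 + d * (((x - m0) / d).toNat : ℤ) = x
    rw [hdivq, Int.toNat_of_nonneg hq0]
    linarith
  · intro t ht
    show ((m0 + d * (t : ℤ) - m0) / d).toNat = t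
    rw [show m0 + d * (t : ℤ) - m0 = d * (t : ℤ) by ring,
      Int.mul_ediv_cancel_left _ (ne_of_gt hd0), Int.toNat_natCast]

theorem stmt9 (k : ℕ) (hk : 1 ≤ k) (ε : ℤ) (hε : ε = 1 ∨ ε = -1)
    (j : ℕ) (hj1 : 2 ≤ j) (hjk : k = 2 * j + 1)
    (r : ℤ) (hr : Odd r) (m : ℤ) (hm : m = ε + (2 : ℤ) ^ j * r) :
    ((Finset.Icc 1 ((2 : ℤ) ^ k)).filter
      (fun x => ((2 : ℤ) ^ k) ∣ (x - m) * (x * m - 1))).card = 2 ^ j := by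
  obtain ⟨jj, rfl⟩ : ∃ jj, j = jj + 2 := ⟨j - 2, by omega⟩
  subst hjk
  have hmodd : Odd m := by
    rw [hm]
    have hεodd : Odd ε := by rcases hε with h | h <;> simp [h]
    exact hεodd.add_even ⟨2 ^ (jj + 1) * r, by ring⟩
  have hfe : ((Finset.Icc 1 ((2 : ℤ) ^ (2 * (jj + 2) + 1))).filter
        (fun x => ((2 : ℤ) ^ (2 * (jj + 2) + 1)) ∣ (x - m) * (x * m - 1)))
      = ((Finset.Icc 1 ((2 : ℤ) ^ (2 * (jj + 2) + 1))).filter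
        (fun x => (2 : ℤ) ^ (jj + 3) ∣ x - m)) :=
    Finset.filter_congr fun x _ => key_equiv jj ε r m hε hr hm x
  rw [hfe, count_cong jj m hmodd]
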